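/- The blow-up time of the dual scalar Riccati equation is nondecreasing in the parameter: for ρ₁ ≤ ρ₂ one has t^k̃_{ρ₁} ≤ t^k̃_{ρ₂}. Moreover lim_{ρ → +∞} t^k̃_ρ = T, i.e. for every t̃ < T there exists ρ̃ such that t^k̃_ρ > t̃ for all ρ > ρ̃. -/

import Mathlib

open Filter Set

/-- Right-hand side of the dual scalar Riccati equation `−k̃̇ = ricD ρ t k̃`. -/
noncomputable def ricD (H11 H13 H14 H21 H22 H33 H44 Hb22 : ℝ → ℝ)
    (ρ t k : ℝ) : ℝ :=
  -(2 * H21 t + (H13 t) ^ 2 + (H14 t) ^ 2) * k - H11 t * k ^ 2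
    - (H22 t - ρ * Hb22 t - H33 t * (H13 t) ^ 2 - H44 t * (H14 t) ^ 2)

open Real

lemma mono_aux {f f' : ℝ → ℝ} {a b : ℝ} (hab : a ≤ b)
    (hc : ContinuousOn f (Icc a b))
    (hd : ∀ t ∈ Ioo a b, HasDerivAt f (f' t) t)
    (h0 : ∀ t ∈ Ioo a b, 0 ≤ f' t) : f a ≤ f b := by
  have := monotoneOn_of_deriv_nonneg (convex_Icc a b) hc
    (fun t ht => by
      rw [interior_Icc] at ht
      exact (hd t ht).differentiableAt.differentiableWithinAt)
    (fun t ht => by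
      rw [interior_Icc] at ht
      rw [(hd t ht).deriv]; exact h0 t ht)
  exact this (left_mem_Icc.2 hab) (right_mem_Icc.2 hab) hab

lemma crossing_aux {f : ℝ → ℝ} {a b y : ℝ} (hab : a < b)
    (hf : ContinuousOn f (Icc a b)) (hfa : y < f a) (hfb : f b ≤ y) :
    ∃ τ ∈ Ioc a b, f τ ≤ y ∧ ∀ s ∈ Ico a τ, y < f s := by
  set S : Set ℝ := Icc a b ∩ f ⁻¹' (Iic y) with hS
  have hSne : S.Nonempty := ⟨b, ⟨right_mem_Icc.2 hab.le, hfb⟩⟩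
  have hSbdd : BddBelow S := ⟨a, fun x hx => hx.1.1⟩
  have hSclosed : IsClosed S :=
    hf.preimage_isClosed_of_isClosed isClosed_Icc isClosed_Iic
  have hmem : sInf S ∈ S := hSclosed.csInf_mem hSne hSbdd
  refine ⟨sInf S, ⟨?_, hmem.1.2⟩, hmem.2, ?_⟩
  · rcases lt_or_eq_of_le hmem.1.1 with h | h
    · exact h
    · exact absurd hmem.2 (by rw [← h]; exact not_le.2 hfa)
  · intro s hs
    by_contra h
    push_neg at h
    have : s ∈ S := ⟨⟨hs.1, hs.2.le.trans hmem.1.2⟩, h⟩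
    exact absurd (csInf_le hSbdd this) (not_le.2 hs.2)

lemma bound_aux {g : ℝ → ℝ} (hg : Continuous g) (h0 : ∀ t ≤ (0:ℝ), g t = g 0)
    {T : ℝ} (hT : 0 ≤ T) : ∃ A, 0 ≤ A ∧ ∀ t ≤ T, |g t| ≤ A := by
  obtain ⟨A, hA⟩ := isCompact_Icc.exists_bound_of_continuousOn
    (s := Icc (0:ℝ) T) hg.continuousOn
  refine ⟨A, le_trans (abs_nonneg _) (hA 0 (left_mem_Icc.2 hT)), fun t ht => ?_⟩
  rcases le_or_gt t 0 with h | h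
  · rw [h0 t h]; exact hA 0 (left_mem_Icc.2 hT)
  · exact hA t ⟨h.le, ht⟩

set_option maxHeartbeats 2000000 in
/-- the blow-up time of the dual scalar Riccati equation is
nondecreasing in `ρ`, and `t^k̃_ρ → T` as `ρ → +∞`. -/
theorem stmt_16
    (T β : ℝ) (hT : 0 < T) (hβ : 0 < β)
    (H11 H12 H13 H14 H21 H22 H33 H44 Hb22 : ℝ → ℝ)
    (hc11 : Continuous H11) (hc12 : Continuous H12) (hc13 : Continuous H13)
    (hc14 : Continuous H14) (hc21 : Continuous H21) (hc22 : Continuous H22)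
    (hc33 : Continuous H33) (hc44 : Continuous H44) (hcb22 : Continuous Hb22)
    (hconst : ∀ t : ℝ, t ≤ 0 → H11 t = H11 0 ∧ H12 t = H12 0 ∧ H13 t = H13 0 ∧
      H14 t = H14 0 ∧ H21 t = H21 0 ∧ H22 t = H22 0 ∧ H33 t = H33 0 ∧
      H44 t = H44 0 ∧ Hb22 t = Hb22 0)
    (hbound : ∀ t : ℝ, t ≤ T → β ≤ H11 t ∧ H22 t ≤ -β ∧ H33 t ≤ -β ∧
      H44 t ≤ -β ∧ Hb22 t < 0)
    (k : ℝ → ℝ → ℝ) (tb : ℝ → EReal)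
    (htbT : ∀ ρ : ℝ, tb ρ < (T : EReal))
    (hterm : ∀ ρ : ℝ, k ρ T = 0)
    (hcont : ∀ ρ : ℝ, ContinuousOn (k ρ) {t : ℝ | tb ρ < (t : EReal) ∧ t ≤ T})
    (hode : ∀ ρ t : ℝ, tb ρ < (t : EReal) → t < T →
      HasDerivAt (k ρ) (-(ricD H11 H13 H14 H21 H22 H33 H44 Hb22 ρ t (k ρ t))) t)
    (hblow : ∀ ρ : ℝ, ⊥ < tb ρ →
      Tendsto (fun t => |k ρ t|) (nhdsWithin (tb ρ).toReal (Set.Ioi (tb ρ).toReal)) atTop) :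
    (∀ ρ₁ ρ₂ : ℝ, ρ₁ ≤ ρ₂ → tb ρ₁ ≤ tb ρ₂) ∧
    ∀ t' : ℝ, t' < T → ∃ ρ' : ℝ, ∀ ρ : ℝ, ρ' < ρ → (t' : EReal) < tb ρ := by
  classical
  set a : ℝ → ℝ := fun t => 2 * H21 t + H13 t ^ 2 + H14 t ^ 2 with ha_def
  set c : ℝ → ℝ := fun t => H22 t - H33 t * H13 t ^ 2 - H44 t * H14 t ^ 2 with hc_def
  have hode' : ∀ ρ t : ℝ, tb ρ < (t : EReal) → t < T →
      HasDerivAt (k ρ) (a t * k ρ t + H11 t * (k ρ t) ^ 2 + (c t - ρ * Hb22 t)) t := by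
    intro ρ t h1 h2
    have h := hode ρ t h1 h2
    convert h using 1
    simp only [ricD, ha_def, hc_def]
    ring
  have hca : Continuous a := ((continuous_const.mul hc21).add (hc13.pow 2)).add (hc14.pow 2)
  have hcc : Continuous c := (hc22.sub (hc33.mul (hc13.pow 2))).sub (hc44.mul (hc14.pow 2))
  have hconsta : ∀ t ≤ (0:ℝ), a t = a 0 := by
    intro t ht
    obtain ⟨-, -, h13, h14, h21, -, -, -, -⟩ := hconst t ht
    simp only [ha_def, h13, h14, h21]
  have hconstc : ∀ t ≤ (0:ℝ), c t = c 0 := by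
    intro t ht
    obtain ⟨-, -, h13, h14, -, h22, h33, h44, -⟩ := hconst t ht
    simp only [hc_def, h13, h14, h22, h33, h44]
  clear_value a c
  obtain ⟨A, hA0, hA⟩ := bound_aux hca hconsta hT.le
  obtain ⟨C, hC0, hC⟩ := bound_aux hcc hconstc hT.le
  obtain ⟨Hb, hHb0, hHb⟩ := bound_aux hcb22 (fun t ht => (hconst t ht).2.2.2.2.2.2.2.2) hT.le
  have hδ : ∃ δ : ℝ, 0 < δ ∧ ∀ t ≤ T, Hb22 t ≤ -δ := by
    obtain ⟨x, hx, hmax⟩ := isCompact_Icc.exists_isMaxOn (s := Icc (0:ℝ) T)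
      ⟨0, left_mem_Icc.2 hT.le⟩ hcb22.continuousOn
    refine ⟨-Hb22 x, by linarith [(hbound x hx.2).2.2.2.2], ?_⟩
    intro t ht
    rcases le_or_gt t 0 with h | h
    · rw [(hconst t h).2.2.2.2.2.2.2.2, neg_neg]
      exact hmax (left_mem_Icc.2 hT.le)
    · rw [neg_neg]; exact hmax ⟨h.le, ht⟩
  obtain ⟨δ, hδ0, hδle⟩ := hδ
  -- continuity of k on compact subintervals
  have hksub : ∀ (ρ t₀ : ℝ), tb ρ < (t₀ : EReal) → ContinuousOn (k ρ) (Icc t₀ T) := by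
    intro ρ t₀ h
    exact (hcont ρ).mono (fun s hs =>
      ⟨lt_of_lt_of_le h (EReal.coe_le_coe_iff.2 hs.1), hs.2⟩)
  -- upper bound lemma
  have hub : ∀ ρ : ℝ, ∃ M, 0 ≤ M ∧ ∀ t : ℝ, tb ρ < (t : EReal) → t ≤ T → k ρ t ≤ M := by
    intro ρ
    set M : ℝ := (A + C + |ρ| * Hb + 1) / β + 1 with hM_def
    have hM1 : (1:ℝ) ≤ M := by
      rw [hM_def]
      have : 0 ≤ (A + C + |ρ| * Hb + 1) / β := by positivity
      linarith
    refine ⟨M, by linarith, ?_⟩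
    intro t h1 h2
    by_contra hgt
    push_neg at hgt
    have htT : t < T := by
      rcases lt_or_eq_of_le h2 with h | h
      · exact h
      · subst h; rw [hterm] at hgt; linarith
    have hβM : A + C + |ρ| * Hb + 1 ≤ β * M := by
      rw [hM_def]
      rw [mul_add, mul_div_cancel₀ _ (ne_of_gt hβ)]
      nlinarith
    have hpos : ∀ s : ℝ, s ≤ T → ∀ x : ℝ, M ≤ x →
        0 < a s * x + H11 s * x ^ 2 + (c s - ρ * Hb22 s) := by
      intro s hs x hx
      have h1x : (1:ℝ) ≤ x := hM1.trans hx
      have haux := abs_le.1 (hA s hs)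
      have hcs := abs_le.1 (hC s hs)
      have hH11 : β ≤ H11 s := (hbound s hs).1
      have hbs : -(|ρ| * Hb) ≤ -(ρ * Hb22 s) := by
        have h1 : |ρ * Hb22 s| ≤ |ρ| * Hb := by
          rw [abs_mul]
          exact mul_le_mul_of_nonneg_left (hHb s hs) (abs_nonneg ρ)
        linarith [le_abs_self (ρ * Hb22 s)]
      have hβx : β * x ^ 2 ≤ H11 s * x ^ 2 := by nlinarith [sq_nonneg x]
      have hax : -(A * x) ≤ a s * x := by nlinarith
      have hMx : β * M ≤ β * x := mul_le_mul_of_nonneg_left hx hβ.le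
      have key1 : (A + C + |ρ| * Hb + 1) * x ≤ β * x * x :=
        mul_le_mul_of_nonneg_right (hβM.trans hMx) (by linarith)
      have key2 : (C + |ρ| * Hb + 1) * 1 ≤ (C + |ρ| * Hb + 1) * x :=
        mul_le_mul_of_nonneg_left h1x (by positivity)
      nlinarith [key1, key2]
    obtain ⟨τ, hτ, hfτ, hbefore⟩ := crossing_aux htT (hksub ρ t h1) hgt
      (by rw [hterm]; linarith)
    have hktτ : k ρ t ≤ k ρ τ := by
      refine mono_aux (f' := fun s => a s * k ρ s + H11 s * (k ρ s) ^ 2 + (c s - ρ * Hb22 s))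
        hτ.1.le ((hksub ρ t h1).mono (Icc_subset_Icc_right hτ.2)) ?_ ?_
      · intro s hs
        exact hode' ρ s (lt_trans h1 (by exact_mod_cast hs.1))
          (lt_of_lt_of_le hs.2 hτ.2)
      · intro s hs
        exact (hpos s (le_of_lt (lt_of_lt_of_le hs.2 hτ.2)) (k ρ s)
          (le_of_lt (hbefore s ⟨hs.1.le, hs.2⟩))).le
    linarith
  -- comparison lemma
  have hcomp : ∀ ρ₁ ρ₂ : ℝ, ρ₁ ≤ ρ₂ → ∀ t₀ : ℝ, tb ρ₁ < (t₀ : EReal) →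
      tb ρ₂ < (t₀ : EReal) → t₀ ≤ T → k ρ₂ t₀ ≤ k ρ₁ t₀ := by
    intro ρ₁ ρ₂ hρ t₀ h1 h2 h3
    rcases lt_or_eq_of_le h3 with ht₀T | rfl
    swap
    · rw [hterm, hterm]
    by_contra hgt
    push_neg at hgt
    set d : ℝ → ℝ := fun s => k ρ₂ s - k ρ₁ s with hd_def
    have hLcont : ContinuousOn (fun s => a s + H11 s * (k ρ₁ s + k ρ₂ s)) (Icc t₀ T) :=
      (hca.continuousOn).add ((hc11.continuousOn).mul
        ((hksub ρ₁ t₀ h1).add (hksub ρ₂ t₀ h2)))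
    obtain ⟨M, hM⟩ := isCompact_Icc.exists_bound_of_continuousOn hLcont
    have hdcont : ContinuousOn d (Icc t₀ T) := (hksub ρ₂ t₀ h2).sub (hksub ρ₁ t₀ h1)
    obtain ⟨τ, hτ, hdτ, hbefore⟩ := crossing_aux (y := 0) ht₀T hdcont
      (by simp only [hd_def]; linarith) (by simp [hd_def, hterm])
    have hψ : d t₀ * Real.exp (M * t₀) ≤ d τ * Real.exp (M * τ) := by
      refine mono_aux (f := fun s => d s * Real.exp (M * s))
        (f' := fun s => ((a s + H11 s * (k ρ₁ s + k ρ₂ s) + M) * d s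
          + (ρ₂ - ρ₁) * (-Hb22 s)) * Real.exp (M * s))
        hτ.1.le ((hdcont.mono (Icc_subset_Icc_right hτ.2)).mul
          ((Real.continuous_exp.comp (continuous_const.mul continuous_id)).continuousOn)) ?_ ?_
      · intro s hs
        have hs1 : tb ρ₁ < (s : EReal) := lt_trans h1 (by exact_mod_cast hs.1)
        have hs2 : tb ρ₂ < (s : EReal) := lt_trans h2 (by exact_mod_cast hs.1)
        have hsT : s < T := lt_of_lt_of_le hs.2 hτ.2
        have hD : HasDerivAt d
            ((a s * k ρ₂ s + H11 s * (k ρ₂ s) ^ 2 + (c s - ρ₂ * Hb22 s))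
              - (a s * k ρ₁ s + H11 s * (k ρ₁ s) ^ 2 + (c s - ρ₁ * Hb22 s))) s :=
          (hode' ρ₂ s hs2 hsT).sub (hode' ρ₁ s hs1 hsT)
        have hE : HasDerivAt (fun s => Real.exp (M * s)) (Real.exp (M * s) * M) s := by
          have := ((hasDerivAt_id s).const_mul M).exp
          simpa using this
        have := hD.fun_mul hE
        convert this using 1
        · rfl
        · rfl
        simp only [hd_def]
        ring
      · intro s hs
        have hsT : s ≤ T := (lt_of_lt_of_le hs.2 hτ.2).le
        have hd0 : 0 ≤ d s := (hbefore s ⟨hs.1.le, hs.2⟩).le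
        have hLM : -M ≤ a s + H11 s * (k ρ₁ s + k ρ₂ s) := by
          have := hM s ⟨hs.1.le, hsT⟩
          rw [Real.norm_eq_abs] at this
          linarith [(abs_le.1 this).1]
        have hb22 : Hb22 s < 0 := (hbound s hsT).2.2.2.2
        have h1' : 0 ≤ (a s + H11 s * (k ρ₁ s + k ρ₂ s) + M) * d s := by nlinarith
        have h2' : 0 ≤ (ρ₂ - ρ₁) * (-Hb22 s) := by nlinarith
        positivity
    have he1 : 0 < Real.exp (M * t₀) := Real.exp_pos _
    have he2 : 0 < Real.exp (M * τ) := Real.exp_pos _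
    have hd1 : 0 < d t₀ := by simp only [hd_def]; linarith
    nlinarith
  constructor
  · intro ρ₁ ρ₂ hρ
    by_contra hlt
    push_neg at hlt
    have hbot : (⊥ : EReal) < tb ρ₁ := lt_of_le_of_lt bot_le hlt
    have hne_top : tb ρ₁ ≠ ⊤ := ((htbT ρ₁).trans (EReal.coe_lt_top T)).ne
    set τs : ℝ := (tb ρ₁).toReal with hτs
    have hcoe : ((τs : ℝ) : EReal) = tb ρ₁ := EReal.coe_toReal hne_top hbot.ne'
    have hτT : τs < T := by
      rw [← EReal.coe_lt_coe_iff, hcoe]; exact htbT ρ₁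
    obtain ⟨M₁, hM₁0, hM₁⟩ := hub ρ₁
    set B : ℝ := |k ρ₂ τs| + 1 with hB
    have hev0 : ∀ᶠ t in nhdsWithin τs (Ioi τs), t ∈ Ioi τs :=
      eventually_mem_nhdsWithin
    have hev1 : ∀ᶠ t in nhdsWithin τs (Ioi τs), t < T :=
      mem_nhdsWithin_of_mem_nhds (Iio_mem_nhds hτT)
    have hev2 : ∀ᶠ t in nhdsWithin τs (Ioi τs), max M₁ B < |k ρ₁ t| := by
      have h := hblow ρ₁ hbot
      rw [← hτs] at h
      exact h.eventually_gt_atTop _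
    have hev3 : ∀ᶠ t in nhdsWithin τs (Ioi τs), |k ρ₂ t - k ρ₂ τs| < 1 := by
      have hτmem : τs ∈ {t : ℝ | tb ρ₂ < (t : EReal) ∧ t ≤ T} :=
        ⟨by rw [hcoe]; exact hlt, hτT.le⟩
      have hcw : ContinuousWithinAt (k ρ₂) {t : ℝ | tb ρ₂ < (t : EReal) ∧ t ≤ T} τs :=
        (hcont ρ₂) τs hτmem
      have hmemf : {t : ℝ | tb ρ₂ < (t : EReal) ∧ t ≤ T} ∈ nhdsWithin τs (Ioi τs) := by
        have h1 : Ioi τs ∈ nhdsWithin τs (Ioi τs) := self_mem_nhdsWithin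
        have h2 : Iio T ∈ nhdsWithin τs (Ioi τs) :=
          mem_nhdsWithin_of_mem_nhds (Iio_mem_nhds hτT)
        filter_upwards [h1, h2] with t ht1 ht2
        refine ⟨?_, ht2.le⟩
        calc tb ρ₂ < tb ρ₁ := hlt
        _ = ((τs : ℝ) : EReal) := hcoe.symm
        _ < (t : EReal) := EReal.coe_lt_coe_iff.2 ht1
      have htend : Tendsto (k ρ₂) (nhdsWithin τs (Ioi τs)) (nhds (k ρ₂ τs)) :=
        hcw.tendsto.mono_left (nhdsWithin_le_of_mem hmemf)
      have := Metric.tendsto_nhds.1 htend 1 one_pos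
      simpa [Real.dist_eq] using this
    obtain ⟨t, ht0, ht1, ht2, ht3⟩ := (hev0.and (hev1.and (hev2.and hev3))).exists
    have hτst : τs < t := ht0
    have htb1 : tb ρ₁ < (t : EReal) := by
      rw [← hcoe]; exact EReal.coe_lt_coe_iff.2 hτst
    have htb2 : tb ρ₂ < (t : EReal) := lt_trans hlt htb1
    have h1 : k ρ₁ t ≤ M₁ := hM₁ t htb1 ht1.le
    have h2 : k ρ₂ t ≤ k ρ₁ t := hcomp ρ₁ ρ₂ hρ t htb1 htb2 ht1.le
    have h3 : k ρ₁ t < -B := by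
      rcases abs_cases (k ρ₁ t) with ⟨he, -⟩ | ⟨he, -⟩
      · rw [he] at ht2; exact absurd h1 (not_le.2 (lt_of_le_of_lt (le_max_left _ _) ht2))
      · rw [he] at ht2
        have := lt_of_le_of_lt (le_max_right M₁ B) ht2
        linarith
    have h4 : -B < k ρ₂ t := by
      have h5 := (abs_lt.1 ht3).1
      have h6 := neg_abs_le (k ρ₂ τs)
      rw [hB]
      linarith
    linarith
  · intro t' ht'
    have hTt' : 0 < T - t' := by linarith
    set m₀ : ℝ := 8 * π ^ 2 / (β * (T - t') ^ 2) with hm₀_def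
    have hπ := Real.pi_pos
    have hm₀ : 0 < m₀ := by rw [hm₀_def]; positivity
    refine ⟨(m₀ + C + A ^ 2 / (2 * β)) / δ, ?_⟩
    intro ρ hρ
    by_contra hle
    push_neg at hle
    have hρ'pos : 0 < (m₀ + C + A ^ 2 / (2 * β)) / δ := by positivity
    have hρ0 : 0 < ρ := hρ'pos.trans hρ
    set m : ℝ := ρ * δ - C - A ^ 2 / (2 * β) with hm_def
    have hmm₀ : m₀ < m := by
      rw [hm_def]
      have := (div_lt_iff₀ hδ0).1 hρ
      linarith
    have hm0 : 0 < m := hm₀.trans hmm₀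
    set q : ℝ := Real.sqrt (β / (2 * m)) with hq_def
    have hq0 : 0 < q := Real.sqrt_pos.2 (by positivity)
    have hq2 : q ^ 2 = β / (2 * m) := Real.sq_sqrt (by positivity)
    set t'' : ℝ := (t' + T) / 2 with ht''_def
    have ht''1 : t' < t'' := by rw [ht''_def]; linarith
    have ht''2 : t'' < T := by rw [ht''_def]; linarith
    clear_value m q t''
    have hdom : ∀ s : ℝ, t' < s → tb ρ < (s : EReal) :=
      fun s hs => lt_of_le_of_lt hle (EReal.coe_lt_coe_iff.2 hs)
    -- key derivative bound
    have hkey : ∀ s ∈ Ioo t'' T, m * (1 + (q * k ρ s) ^ 2) ≤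
        a s * k ρ s + H11 s * (k ρ s) ^ 2 + (c s - ρ * Hb22 s) := by
      intro s hs
      have hsT : s ≤ T := hs.2.le
      have haux : |a s| ≤ A := hA s hsT
      have hcs := abs_le.1 (hC s hsT)
      have hH11 : β ≤ H11 s := (hbound s hsT).1
      have hHbs : Hb22 s ≤ -δ := hδle s hsT
      have e1 : m * (1 + (q * k ρ s) ^ 2) = m + β / 2 * (k ρ s) ^ 2 := by
        have e2 : (q * k ρ s) ^ 2 = q ^ 2 * (k ρ s) ^ 2 := by ring
        rw [e2, hq2]
        field_simp
      rw [e1]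
      have h1 : -(A * |k ρ s|) ≤ a s * k ρ s := by
        have h2 : |a s * k ρ s| ≤ A * |k ρ s| := by
          rw [abs_mul]
          exact mul_le_mul_of_nonneg_right haux (abs_nonneg _)
        linarith [neg_abs_le (a s * k ρ s)]
      have h2 : ρ * δ ≤ -(ρ * Hb22 s) := by nlinarith
      have h3 : β * (k ρ s) ^ 2 ≤ H11 s * (k ρ s) ^ 2 := by nlinarith [sq_nonneg (k ρ s)]
      have h4 : A * |k ρ s| ≤ β / 2 * (k ρ s) ^ 2 + A ^ 2 / (2 * β) := by
        have h7 : (0:ℝ) < 2 * β := by linarith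
        have h8 : 2 * β * (A * |k ρ s|) ≤ 2 * β * (β / 2 * (k ρ s) ^ 2 + A ^ 2 / (2 * β)) := by
          have e3 : 2 * β * (β / 2 * (k ρ s) ^ 2 + A ^ 2 / (2 * β))
              = β ^ 2 * (k ρ s) ^ 2 + A ^ 2 := by
            field_simp
          rw [e3]
          nlinarith [sq_nonneg (β * |k ρ s| - A), sq_abs (k ρ s)]
        exact le_of_mul_le_mul_left h8 h7
      rw [hm_def]
      linarith only [hcs.1, h1, h2, h3, h4]
    -- monotonicity of arctan-shifted function
    set r : ℝ := q * m with hr_def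
    have hrpos : 0 < r := hr_def ▸ mul_pos hq0 hm0
    clear_value r
    have harc : Real.arctan (q * k ρ t'') - r * t'' ≤ Real.arctan (q * k ρ T) - r * T := by
      refine mono_aux (f := fun s => Real.arctan (q * k ρ s) - r * s)
        (f' := fun s => 1 / (1 + (q * k ρ s) ^ 2) *
          (q * (a s * k ρ s + H11 s * (k ρ s) ^ 2 + (c s - ρ * Hb22 s))) - r)
        ht''2.le ?_ ?_ ?_
      · have hk : ContinuousOn (k ρ) (Icc t'' T) := hksub ρ t'' (hdom t'' ht''1)
        exact ((Real.continuous_arctan.comp_continuousOn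
          (continuousOn_const.mul hk)).sub
          ((continuous_const.mul continuous_id).continuousOn))
      · intro s hs
        have hd := ((hode' ρ s (hdom s (ht''1.trans hs.1)) hs.2).const_mul q).arctan
        have hr' : HasDerivAt (fun s : ℝ => r * s) r s := by
          simpa using (hasDerivAt_id s).const_mul r
        exact hd.sub hr'
      · intro s hs
        have hX : 0 < 1 + (q * k ρ s) ^ 2 := by positivity
        have hk := hkey s hs
        have h5 : r * (1 + (q * k ρ s) ^ 2) ≤
            q * (a s * k ρ s + H11 s * (k ρ s) ^ 2 + (c s - ρ * Hb22 s)) := by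
          rw [hr_def]
          calc q * m * (1 + (q * k ρ s) ^ 2) = q * (m * (1 + (q * k ρ s) ^ 2)) := by ring
          _ ≤ _ := mul_le_mul_of_nonneg_left hk hq0.le
        rw [sub_nonneg]
        calc r = r * (1 + (q * k ρ s) ^ 2) / (1 + (q * k ρ s) ^ 2) := by
              field_simp
        _ ≤ q * (a s * k ρ s + H11 s * (k ρ s) ^ 2 + (c s - ρ * Hb22 s))
              / (1 + (q * k ρ s) ^ 2) := (div_le_div_iff_of_pos_right hX).2 h5
        _ = 1 / (1 + (q * k ρ s) ^ 2) *
              (q * (a s * k ρ s + H11 s * (k ρ s) ^ 2 + (c s - ρ * Hb22 s))) := by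
              ring
    -- bound by π and conclude
    have hπbd : r * (T - t'') < π := by
      have h1 := Real.arctan_lt_pi_div_two (q * k ρ T)
      have h2 := Real.neg_pi_div_two_lt_arctan (q * k ρ t'')
      nlinarith [harc]
    have hTt'' : T - t'' = (T - t') / 2 := by rw [ht''_def]; ring
    have h6 : r * (T - t') < 2 * π := by
      rw [hTt''] at hπbd
      linarith
    have hr2 : r ^ 2 = β * m / 2 := by
      rw [hr_def, mul_pow, hq2]
      field_simp
    have h7 : 8 * π ^ 2 < m * (β * (T - t') ^ 2) := by
      have := (div_lt_iff₀ (by positivity : (0:ℝ) < β * (T - t') ^ 2)).1 hmm₀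
      linarith
    have h8 : (r * (T - t')) ^ 2 < (2 * π) ^ 2 := by
      nlinarith [h6, mul_pos hrpos hTt']
    have h9 : r ^ 2 * (T - t') ^ 2 = β * m / 2 * (T - t') ^ 2 := by rw [hr2]
    nlinarith [h8, h9, h7, sq_nonneg (T - t'), hTt', hm0, hβ]
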